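/- The function A ↦ det(A)^(1/n) is concave on positive definite n×n Hermitian matrices: for positive definite Hermitian A, B and t ∈ [0,1], det(tA + (1−t)B)^(1/n) ≥ t·det(A)^(1/n) + (1−t)·det(B)^(1/n). -/

import Mathlib

open scoped ComplexOrder
open Finset Matrix


lemma geom_superadd {n : ℕ} (hn : 0 < n) (lam : Fin n → ℝ) (hl : ∀ i, 0 < lam i) :
    1 + (∏ i, lam i) ^ ((1:ℝ)/n) ≤ (∏ i, (1 + lam i)) ^ ((1:ℝ)/n) := by
  have h1l : ∀ i, (0:ℝ) < 1 + lam i := fun i => by linarith [hl i]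
  have hP : (0:ℝ) < ∏ i, (1 + lam i) := prod_pos fun i _ => h1l i
  have hwn : (0:ℝ) ≤ 1/n := one_div_nonneg.mpr (Nat.cast_nonneg n)
  have hw : ∑ _i : Fin n, (1:ℝ)/n = 1 := by
    rw [Finset.sum_const, card_univ, Fintype.card_fin, nsmul_eq_mul, mul_one_div,
      div_self (by exact_mod_cast hn.ne')]
  have key1 : ∏ i, (lam i / (1 + lam i)) ^ ((1:ℝ)/n) ≤ ∑ i, ((1:ℝ)/n) * (lam i / (1 + lam i)) :=
    Real.geom_mean_le_arith_mean_weighted univ _ _ (fun i _ => hwn) hw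
      (fun i _ => div_nonneg (hl i).le (h1l i).le)
  have key2 : ∏ i, (1 / (1 + lam i)) ^ ((1:ℝ)/n) ≤ ∑ i, ((1:ℝ)/n) * (1 / (1 + lam i)) :=
    Real.geom_mean_le_arith_mean_weighted univ _ _ (fun i _ => hwn) hw
      (fun i _ => div_nonneg zero_le_one (h1l i).le)
  have hsum : (∑ i, ((1:ℝ)/n) * (1 / (1 + lam i))) + ∑ i, ((1:ℝ)/n) * (lam i / (1 + lam i)) = 1 := by
    rw [← Finset.sum_add_distrib]
    have : ∀ i ∈ univ, ((1:ℝ)/n) * (1/(1+lam i)) + ((1:ℝ)/n) * (lam i/(1+lam i)) = (1:ℝ)/n := by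
      intro i _
      have h := (h1l i).ne'
      field_simp
    rw [Finset.sum_congr rfl this, hw]
  have e1 : ∏ i, (lam i / (1 + lam i)) ^ ((1:ℝ)/n)
      = (∏ i, lam i) ^ ((1:ℝ)/n) / (∏ i, (1 + lam i)) ^ ((1:ℝ)/n) := by
    rw [Finset.prod_congr rfl fun i _ => Real.div_rpow (hl i).le (h1l i).le ((1:ℝ)/n),
      Finset.prod_div_distrib, Real.finset_prod_rpow _ _ (fun i _ => (hl i).le),
      Real.finset_prod_rpow _ _ (fun i _ => (h1l i).le)]
  have e2 : ∏ i, (1 / (1 + lam i)) ^ ((1:ℝ)/n)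
      = 1 / (∏ i, (1 + lam i)) ^ ((1:ℝ)/n) := by
    rw [Finset.prod_congr rfl fun i _ => Real.div_rpow zero_le_one (h1l i).le ((1:ℝ)/n),
      Finset.prod_div_distrib, Real.finset_prod_rpow _ _ (fun i _ => (h1l i).le)]
    simp
  rw [e1] at key1
  rw [e2] at key2
  have hPr : (0:ℝ) < (∏ i, (1 + lam i)) ^ ((1:ℝ)/n) := Real.rpow_pos_of_pos hP _
  rw [← div_le_one hPr]
  calc (1 + (∏ i, lam i) ^ ((1:ℝ)/n)) / (∏ i, (1 + lam i)) ^ ((1:ℝ)/n)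
      = 1 / (∏ i, (1 + lam i)) ^ ((1:ℝ)/n)
        + (∏ i, lam i) ^ ((1:ℝ)/n) / (∏ i, (1 + lam i)) ^ ((1:ℝ)/n) := by ring
    _ ≤ (∑ i, ((1:ℝ)/n) * (1 / (1 + lam i))) + ∑ i, ((1:ℝ)/n) * (lam i / (1 + lam i)) :=
        add_le_add key2 key1
    _ = 1 := hsum

open scoped MatrixOrder in
lemma minkowski_det {n : ℕ} (hn : 0 < n) (A B : Matrix (Fin n) (Fin n) ℂ)
    (hA : A.PosDef) (hB : B.PosDef) :
    (A.det.re) ^ ((1:ℝ)/n) + (B.det.re) ^ ((1:ℝ)/n) ≤ ((A + B).det.re) ^ ((1:ℝ)/n) := by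
  classical
  set S := CFC.sqrt A with hSdef
  have hS : S.PosSemidef := (CFC.sqrt_nonneg A).posSemidef
  have hSH : Sᴴ = S := hS.isHermitian
  have hSS : S * S = A := CFC.sqrt_mul_sqrt_self A hA.posSemidef.nonneg
  have hdA : 0 < A.det := hA.det_pos
  have hdetSS : S.det * S.det = A.det := by rw [← det_mul, hSS]
  have hSdet0 : S.det ≠ 0 := by
    intro h
    rw [h, mul_zero] at hdetSS
    exact hdA.ne' hdetSS.symm
  have hSunit : IsUnit S.det := isUnit_iff_ne_zero.mpr hSdet0
  have hSi : S * S⁻¹ = 1 := mul_nonsing_inv S hSunit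
  have hiS : S⁻¹ * S = 1 := nonsing_inv_mul S hSunit
  have hiSH : (S⁻¹)ᴴ = S⁻¹ := by rw [conjTranspose_nonsing_inv, hSH]
  set C := S⁻¹ * B * S⁻¹ with hCdef
  have hCH : C.IsHermitian := by
    show Cᴴ = C
    rw [hCdef, conjTranspose_mul, conjTranspose_mul, hiSH, hB.isHermitian.eq, Matrix.mul_assoc]
  have hC : C.PosDef := by
    refine PosDef.of_dotProduct_mulVec_pos hCH fun x hx => ?_
    have hy : S⁻¹ *ᵥ x ≠ 0 := by
      intro h
      apply hx
      have : S *ᵥ (S⁻¹ *ᵥ x) = 0 := by rw [h, mulVec_zero]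
      rwa [mulVec_mulVec, hSi, one_mulVec] at this
    have e : dotProduct (star x) (C *ᵥ x)
        = dotProduct (star (S⁻¹ *ᵥ x)) (B *ᵥ (S⁻¹ *ᵥ x)) := by
      rw [star_mulVec, hiSH, hCdef]
      rw [← mulVec_mulVec, ← mulVec_mulVec, dotProduct_mulVec]
    rw [e]
    exact hB.dotProduct_mulVec_pos hy
  set lam := hCH.eigenvalues with hlamdef
  have hlam : ∀ i, 0 < lam i := hC.eigenvalues_pos
  -- A + B = S * (1 + C) * S
  have hSCS : S * C * S = B := by
    rw [hCdef]
    simp only [Matrix.mul_assoc, hiS, Matrix.mul_one]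
    rw [← Matrix.mul_assoc, hSi, Matrix.one_mul]
  have hAB : A + B = S * (1 + C) * S := by
    rw [Matrix.mul_add, Matrix.add_mul, Matrix.mul_one, hSS, hSCS]
  -- determinant identities
  have hdet1C : (1 + C).det = ∏ i, (1 + (lam i : ℂ)) := by
    set U := (hCH.eigenvectorUnitary : Matrix (Fin n) (Fin n) ℂ) with hU
    have hUU : U * star U = 1 := (Matrix.mem_unitaryGroup_iff).mp hCH.eigenvectorUnitary.2
    have hspec : C = U * diagonal (RCLike.ofReal ∘ lam) * star U := hCH.spectral_theorem
    have : 1 + C = U * (1 + diagonal (RCLike.ofReal ∘ lam)) * star U := by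
      rw [Matrix.mul_add, Matrix.add_mul, Matrix.mul_one, hUU, ← hspec]
    rw [this, det_mul_right_comm, hUU, Matrix.one_mul, ← Matrix.diagonal_one,
      diagonal_add, det_diagonal]
    simp
  have hdet1 : (A + B).det = A.det * ∏ i, (1 + (lam i : ℂ)) := by
    rw [hAB, det_mul, det_mul, mul_comm S.det, mul_assoc, ← hdetSS, hdet1C]
    ring
  have hdet2 : B.det = A.det * ∏ i, (lam i : ℂ) := by
    rw [← hSCS, det_mul, det_mul, mul_comm S.det, mul_assoc, ← hdetSS,
      hCH.det_eq_prod_eigenvalues]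
    push_cast [hlamdef]
    simp only [← hlamdef]
    exact mul_comm _ _
  -- pass to real parts
  have him : A.det.im = 0 := by
    have := (Complex.lt_def.mp hdA).2
    simpa using this.symm
  have hAre : A.det = ((A.det.re : ℝ) : ℂ) := Complex.ext (by simp) (by simp [him])
  set a := A.det.re with hadef
  have ha : 0 < a := (Complex.lt_def.mp hdA).1
  have hABre : (A + B).det.re = a * ∏ i, (1 + lam i) := by
    have e : (∏ i, (1 + (lam i:ℂ))) = ((∏ i, (1 + lam i) : ℝ) : ℂ) := by push_cast; rfl
    rw [hdet1, hAre, e, ← Complex.ofReal_mul, Complex.ofReal_re]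
  have hBre : B.det.re = a * ∏ i, lam i := by
    have e : (∏ i, ((lam i:ℂ))) = ((∏ i, lam i : ℝ) : ℂ) := by push_cast; rfl
    rw [hdet2, hAre, e, ← Complex.ofReal_mul, Complex.ofReal_re]
  rw [hABre, hBre]
  have hP2 : (0:ℝ) ≤ ∏ i, lam i := (prod_pos fun i _ => hlam i).le
  have hP1 : (0:ℝ) ≤ ∏ i, (1 + lam i) := (prod_pos fun i _ => by linarith [hlam i]).le
  rw [Real.mul_rpow ha.le hP2, Real.mul_rpow ha.le hP1]
  calc a ^ ((1:ℝ)/n) + a ^ ((1:ℝ)/n) * (∏ i, lam i) ^ ((1:ℝ)/n)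
      = a ^ ((1:ℝ)/n) * (1 + (∏ i, lam i) ^ ((1:ℝ)/n)) := by ring
    _ ≤ a ^ ((1:ℝ)/n) * (∏ i, (1 + lam i)) ^ ((1:ℝ)/n) := by
        exact mul_le_mul_of_nonneg_left (geom_superadd hn lam hlam)
          (Real.rpow_nonneg ha.le _)

lemma smul_posDef_c {n : ℕ} {A : Matrix (Fin n) (Fin n) ℂ} (hA : A.PosDef) {t : ℝ} (ht : 0 < t) :
    ((t : ℂ) • A).PosDef := by
  refine PosDef.of_dotProduct_mulVec_pos ?_ ?_
  · show ((t:ℂ) • A)ᴴ = (t:ℂ) • A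
    rw [conjTranspose_smul, hA.isHermitian.eq]
    congr 1
    simp
  · intro x hx
    rw [smul_mulVec, dotProduct_smul]
    have h0 : (0:ℂ) < (t:ℂ) := by exact_mod_cast ht
    rw [smul_eq_mul]
    exact mul_pos h0 (hA.dotProduct_mulVec_pos hx)

lemma det_re_smul {n : ℕ} (A : Matrix (Fin n) (Fin n) ℂ) (t : ℝ) :
    ((t : ℂ) • A).det.re = t ^ n * A.det.re := by
  rw [det_smul, Fintype.card_fin]
  rw [← Complex.ofReal_pow, Complex.re_ofReal_mul]

lemma rpow_pow_aux {n : ℕ} (hn : 0 < n) {t x : ℝ} (ht : 0 ≤ t) (hx : 0 ≤ x) :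
    (t ^ n * x) ^ ((1:ℝ)/n) = t * x ^ ((1:ℝ)/n) := by
  rw [Real.mul_rpow (pow_nonneg ht n) hx, ← Real.rpow_natCast t n,
    ← Real.rpow_mul ht]
  rw [mul_one_div, div_self (by exact_mod_cast hn.ne'), Real.rpow_one]

/-- Concavity of `A ↦ det(A)^(1/n)` on positive definite Hermitian matrices. -/
theorem det_rpow_concave (n : ℕ) (hn : 0 < n) (A B : Matrix (Fin n) (Fin n) ℂ)
    (hA : A.PosDef) (hB : B.PosDef) (t : ℝ) (ht0 : 0 ≤ t) (ht1 : t ≤ 1) :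
    ((((t : ℂ) • A + ((1 - t : ℝ) : ℂ) • B).det).re) ^ ((1 : ℝ) / n) ≥
      t * (A.det.re) ^ ((1 : ℝ) / n) + (1 - t) * (B.det.re) ^ ((1 : ℝ) / n) := by
  have hAre : 0 ≤ A.det.re := (Complex.lt_def.mp hA.det_pos).1.le
  have hBre : 0 ≤ B.det.re := (Complex.lt_def.mp hB.det_pos).1.le
  rcases eq_or_lt_of_le ht0 with h0 | h0
  · subst h0
    simp
  rcases eq_or_lt_of_le ht1 with h1 | h1
  · subst h1
    simp
  have hA' : ((t : ℂ) • A).PosDef := smul_posDef_c hA h0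
  have hB' : (((1 - t : ℝ) : ℂ) • B).PosDef := smul_posDef_c hB (by linarith)
  have key := minkowski_det hn _ _ hA' hB'
  rw [det_re_smul, det_re_smul, rpow_pow_aux hn ht0 hAre,
    rpow_pow_aux hn (by linarith : (0:ℝ) ≤ 1 - t) hBre] at key
  exact key
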